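/- Let E be a balanced vector bundle on P^1 of rank r ≥ 2 and slope s, and let ℓ ≥ ⌊s⌋ be an integer. Then there exists a balanced vector bundle K on P^1 with rk(K) = r - 1 and deg(K) = deg(E) - ℓ, together with a locally split injection (subbundle inclusion) K → E. -/
import Mathlib

lemma auxFilterCard (N K : ℕ) :
    ((Finset.univ : Finset (Fin N)).filter (fun j : Fin N => K ≤ (j : ℕ))).card = N - K := by
  rw [Finset.card_filter]
  rw [Fin.sum_univ_eq_sum_range (fun i => if K ≤ i then 1 else 0)]
  rw [← Finset.card_filter]
  have h : (Finset.range N).filter (fun j => K ≤ j) = Finset.Ico K N := by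
    ext x; simp [Finset.mem_Ico]; omega
  rw [h, Nat.card_Ico]

lemma auxSumIte (N K : ℕ) :
    (∑ i : Fin N, (if K ≤ (i : ℕ) then (1 : ℤ) else 0)) = ((N - K : ℕ) : ℤ) := by
  rw [Finset.sum_boole, auxFilterCard]

lemma lemT {k : Type} [Field k] {ι κ : Type} [Fintype κ] (A : ι → κ → k)
    (row : κ → ι) (key : κ → ℤ)
    (hpiv : ∀ j, A (row j) j ≠ 0)
    (htri : ∀ j j', j' ≠ j → key j' ≤ key j → A (row j) j' = 0) :
    LinearIndependent k (fun j : κ => fun i : ι => A i j) := by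
  classical
  rw [Fintype.linearIndependent_iff]
  intro g hg
  have hrow : ∀ i, (∑ j, g j * A i j) = 0 := by
    intro i
    have := congrFun hg i
    simpa using this
  have core : ∀ j, (∀ j', key j < key j' → g j' = 0) → g j = 0 := by
    intro j h
    have h0 := hrow (row j)
    rw [Finset.sum_eq_single j] at h0
    · exact (mul_eq_zero.mp h0).resolve_right (hpiv j)
    · intro b _ hb
      rcases le_or_gt (key b) (key j) with hle | hlt
      · rw [htri j b hb hle, mul_zero]
      · rw [h b hlt, zero_mul]
    · intro hj; exact absurd (Finset.mem_univ j) hj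
  have main : ∀ N : ℕ, ∀ j, (Finset.univ.filter fun j' => key j < key j').card ≤ N → g j = 0 := by
    intro N
    induction N with
    | zero =>
      intro j hj
      refine core j fun j' hlt => ?_
      exfalso
      have : 0 < (Finset.univ.filter fun j'' => key j < key j'').card :=
        Finset.card_pos.mpr ⟨j', Finset.mem_filter.mpr ⟨Finset.mem_univ _, hlt⟩⟩
      omega
    | succ N ih =>
      intro j hj
      refine core j fun j' hlt => ih j' ?_
      have hss : (Finset.univ.filter fun x => key j' < key x) ⊂
          (Finset.univ.filter fun x => key j < key x) := by
        refine Finset.ssubset_iff_of_subset ?_ |>.mpr ?_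
        · intro x hx
          rw [Finset.mem_filter] at hx ⊢
          exact ⟨hx.1, hlt.trans hx.2⟩
        · exact ⟨j', Finset.mem_filter.mpr ⟨Finset.mem_univ _, hlt⟩, by simp⟩
      have := Finset.card_lt_card hss
      omega
  intro j
  exact main _ j le_rfl

/-!
STATEMENT 5. Concrete model of bundles and bundle maps on ℙ¹ over an
algebraically closed field `k`: a bundle is `⊕_i O(a i)`; a bundle map
`⊕_j O(b j) → ⊕_i O(a i)` is a matrix `M` whose `(i,j)` entry is a homogeneous
polynomial of degree `a i - b j` in two variables (zero if that degree is
negative).  The map is a locally split injection (subbundle inclusion) iff the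
evaluated matrix has full column rank at every point `p ≠ 0` of `𝔸² \ 0`
(equivalently at every point of ℙ¹).  Balanced = summand degrees differ by at
most 1; the floor of the slope of `E` is `Int.fdiv (∑ a i) r`.
-/

/-- `M` is a matrix of homogeneous forms representing a bundle map
`⊕_j O(b j) → ⊕_i O(a i)`. -/
def IsHomMat {k : Type} [CommRing k] {ι κ' : Type}
    (a : ι → ℤ) (b : κ' → ℤ) (M : ι → κ' → MvPolynomial (Fin 2) k) : Prop :=
  ∀ i j, (M i j).IsHomogeneous (a i - b j).toNat ∧ (a i - b j < 0 → M i j = 0)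

/-- The columns of `M` are linearly independent at every point of ℙ¹,
i.e. the corresponding bundle map is a locally split injection. -/
def IsLocSplitInj {k : Type} [CommRing k] {ι κ' : Type}
    (M : ι → κ' → MvPolynomial (Fin 2) k) : Prop :=
  ∀ p : Fin 2 → k, p ≠ 0 →
    LinearIndependent k fun j : κ' => fun i : ι => MvPolynomial.eval p (M i j)

theorem exists_balanced_corank_one_subbundle
    {k : Type} [Field k] [IsAlgClosed k]
    (r : ℕ) (hr : 2 ≤ r) (a : Fin r → ℤ)
    (hbal : ∀ i j, a i ≤ a j + 1)
    (ℓ : ℤ) (hℓ : Int.fdiv (∑ i, a i) (r : ℤ) ≤ ℓ) :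
    ∃ b : Fin (r - 1) → ℤ, (∀ i j, b i ≤ b j + 1) ∧
      (∑ j, b j) = (∑ i, a i) - ℓ ∧
      ∃ M : Fin r → Fin (r - 1) → MvPolynomial (Fin 2) k,
        IsHomMat a b M ∧ IsLocSplitInj M := by
  classical
  obtain ⟨n, rfl⟩ : ∃ n, r = n + 2 := ⟨r - 2, by omega⟩
  clear hr
  set σ : Equiv.Perm (Fin (n + 2)) := Tuple.sort a with hσ
  set a' : Fin (n + 2) → ℤ := a ∘ σ with ha'
  have hmono : Monotone a' := Tuple.monotone_sort a
  set m : ℤ := a' 0 with hm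
  have hub : ∀ i, a' i ≤ m + 1 := fun i => hbal (σ i) (σ 0)
  have hlb : ∀ i, m ≤ a' i := fun i => hmono (Fin.zero_le i)
  have hSa : (∑ i, a' i) = ∑ i, a i := Equiv.sum_comp σ a
  set S : ℤ := ∑ i, a i with hS
  have hH : ∀ i0 : Fin (n + 2), a' i0 = m →
      S ≤ (n + 2) * m + ((n + 1 - (i0 : ℕ) : ℕ) : ℤ) := by
    intro i0 h0
    have hpt : ∀ i : Fin (n + 2),
        a' i ≤ m + (if (i0 : ℕ) + 1 ≤ (i : ℕ) then (1 : ℤ) else 0) := by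
      intro i
      by_cases hc : (i0 : ℕ) + 1 ≤ (i : ℕ)
      · simpa [hc] using hub i
      · have hle : i ≤ i0 := by
          rw [Fin.le_def]; omega
        have := hmono hle
        simp only [hc, if_false, add_zero]
        omega
    have h1 : (∑ i, a' i) ≤ ∑ i : Fin (n + 2),
        (m + (if (i0 : ℕ) + 1 ≤ (i : ℕ) then (1 : ℤ) else 0)) :=
      Finset.sum_le_sum fun i _ => hpt i
    rw [Finset.sum_add_distrib, Finset.sum_const, Finset.card_univ, auxSumIte] at h1
    rw [← hSa]
    have hcard : (n + 2) - ((i0 : ℕ) + 1) = n + 1 - (i0 : ℕ) := by omega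
    rw [hcard] at h1
    simpa [nsmul_eq_mul] using h1
  have hSub : S ≤ (n + 2) * m + (n + 1) := by
    have := hH 0 rfl
    simpa using this
  have hSlb : (n + 2 : ℤ) * m ≤ S := by
    have h1 : (∑ _i : Fin (n + 2), m) ≤ ∑ i, a' i := Finset.sum_le_sum fun i _ => hlb i
    rw [Finset.sum_const, Finset.card_univ, hSa] at h1
    simpa [nsmul_eq_mul] using h1
  have hmℓ : m ≤ ℓ := by
    refine le_trans ?_ hℓ
    rw [Int.fdiv_eq_ediv_of_nonneg _ (by positivity)]
    rw [Int.le_ediv_iff_mul_le (by positivity)]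
    push_cast
    linarith
  set c : ℤ := (S - ℓ) / ((n : ℤ) + 1) with hc
  set u' : ℤ := (S - ℓ) % ((n : ℤ) + 1) with hu'
  have hdiv : S - ℓ = ((n : ℤ) + 1) * c + u' := (Int.mul_ediv_add_emod _ _).symm
  have hu'0 : 0 ≤ u' := Int.emod_nonneg _ (by positivity)
  have hu'lt : u' < (n : ℤ) + 1 := Int.emod_lt_of_pos _ (by positivity)
  have hkey : ((n : ℤ) + 1) * c + u' ≤ ((n : ℤ) + 1) * (m + 1) := by nlinarith [hSub, hmℓ, hdiv]
  have hcle : c ≤ m + 1 := by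
    have h2 : ((n : ℤ) + 1) * c ≤ ((n : ℤ) + 1) * (m + 1) := by linarith
    exact le_of_mul_le_mul_left h2 (by positivity)
  have hcu0 : c = m + 1 → u' = 0 := by
    intro h; rw [h] at hkey; linarith
  set u : ℕ := u'.toNat with hu
  have hu'n : (u : ℤ) = u' := Int.toNat_of_nonneg hu'0
  have hun : u ≤ n := by omega
  set w : ℕ := if c = m then u else if c = m + 1 then n + 1 else 0 with hw
  set B : ℕ := n + 1 - w with hB
  set b : Fin (n + 1) → ℤ := fun j => c + (if n + 1 - u ≤ (j : ℕ) then 1 else 0) with hb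
  have hAtail : ∀ i : Fin (n + 2), B + 1 ≤ (i : ℕ) → a' i = m + 1 := by
    intro i hi
    by_contra hne
    have h0 : a' i = m := by have := hub i; have := hlb i; omega
    have h2 := hH i h0
    rw [hw] at hB
    split_ifs at hB with h3 h4
    · have h1 : (n + 2 : ℤ) * m + u' ≤ S := by
        rw [h3] at hdiv; linarith
      have h5 : u' ≤ ((n + 1 - (i : ℕ) : ℕ) : ℤ) := by linarith
      omega
    · have h6 := hcu0 h4
      have h1 : (n + 2 : ℤ) * m + (n + 1) + u' ≤ S := by
        rw [h4] at hdiv; nlinarith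
      have h5 : ((n : ℤ) + 1) + u' ≤ ((n + 1 - (i : ℕ) : ℕ) : ℤ) := by linarith
      omega
    · have := i.isLt; omega
  have hP2 : ∀ j : Fin (n + 1), (j : ℕ) < B → b j ≤ m := by
    intro j hj
    rw [hw] at hB
    simp only [hb]
    split_ifs at hB with h3 h4
    · have hcond : ¬ (n + 1 - u ≤ (j : ℕ)) := by omega
      simp [hcond, h3]
    · omega
    · have hclt : c < m := by
        rcases lt_or_eq_of_le hcle with h | h
        · rcases lt_or_eq_of_le (Int.lt_add_one_iff.mp h) with h' | h'
          · exact h'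
          · exact absurd h' h3
        · exact absurd h h4
      split_ifs <;> omega
  have hP3 : ∀ j : Fin (n + 1), B ≤ (j : ℕ) → b j = m + 1 ∧ a' j.succ = m + 1 := by
    intro j hj
    have htail : a' j.succ = m + 1 := by
      refine hAtail j.succ ?_
      rw [Fin.val_succ]; omega
    refine ⟨?_, htail⟩
    rw [hw] at hB
    simp only [hb]
    split_ifs at hB with h3 h4
    · have hcond : n + 1 - u ≤ (j : ℕ) := by omega
      simp [hcond, h3]
    · have h6 := hcu0 h4
      have hu0 : u = 0 := by omega
      have hcond : ¬ (n + 1 - u ≤ (j : ℕ)) := by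
        have := j.isLt; omega
      simp [hcond, h4]
    · have := j.isLt; omega
  have hP1 : ∀ j : Fin (n + 1), b j ≤ a' j.succ := by
    intro j
    rcases lt_or_ge (j : ℕ) B with hj | hj
    · exact le_trans (hP2 j hj) (hlb _)
    · have := hP3 j hj; omega
  set F : Fin (n + 2) → Fin (n + 1) → MvPolynomial (Fin 2) k := fun i j =>
    if (i : ℕ) = (j : ℕ) ∧ b j ≤ a' i then MvPolynomial.X 0 ^ (a' i - b j).toNat
    else if (i : ℕ) = (j : ℕ) + 1 then MvPolynomial.X 1 ^ (a' i - b j).toNat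
    else 0 with hF
  refine ⟨b, ?_, ?_, fun i j => F (σ.symm i) j, ?_, ?_⟩
  · intro i j
    simp only [hb]
    split_ifs <;> omega
  · -- sum
    simp only [hb]
    rw [Finset.sum_add_distrib, Finset.sum_const, Finset.card_univ, auxSumIte]
    rw [show n + 2 - 1 = n + 1 from rfl]
    rw [show n + 1 - (n + 1 - u) = u by omega]
    simp only [Fintype.card_fin, nsmul_eq_mul]
    push_cast
    linarith [hdiv, hu'n]
  · -- IsHomMat
    intro i j
    have hai : a i = a' (σ.symm i) := by
      rw [ha']; simp
    beta_reduce
    rw [hai]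
    simp only [hF]
    split_ifs with h1 h2
    · constructor
      · exact MvPolynomial.isHomogeneous_X_pow _ _
      · intro hneg; exact absurd h1.2 (by omega)
    · constructor
      · exact MvPolynomial.isHomogeneous_X_pow _ _
      · intro hneg
        exfalso
        have hij : σ.symm i = j.succ := by
          apply Fin.ext; rw [Fin.val_succ]; exact h2
        rw [hij] at hneg
        have := hP1 j
        omega
    · exact ⟨MvPolynomial.isHomogeneous_zero _ _ _, fun _ => rfl⟩
  · -- IsLocSplitInj
    intro p hp
    have hp01 : p 0 ≠ 0 ∨ p 1 ≠ 0 := by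
      by_contra h
      push_neg at h
      apply hp
      funext t
      fin_cases t <;> simp [h.1, h.2]
    set A : Fin (n + 2) → Fin (n + 1) → k := fun i j => MvPolynomial.eval p (F i j) with hA
    have base : LinearIndependent k (fun j : Fin (n + 1) => fun i : Fin (n + 2) => A i j) := by
      by_cases hp1 : p 1 ≠ 0
      · refine lemT A (fun j => j.succ) (fun j => ((j : ℕ) : ℤ)) ?_ ?_
        · intro j
          have hcond1 : ¬ ((j.succ : ℕ) = (j : ℕ) ∧ b j ≤ a' j.succ) := by
            intro hcon
            have := hcon.1
            rw [Fin.val_succ] at this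
            omega
          beta_reduce
          simp only [hA, hF]
          rw [if_neg hcond1, if_pos (Fin.val_succ j)]
          rw [map_pow, MvPolynomial.eval_X]
          exact pow_ne_zero _ hp1
        · intro j j' hne hkle
          beta_reduce at hkle ⊢
          have hvne : (j' : ℕ) ≠ (j : ℕ) := fun h => hne (Fin.ext h)
          have hvle : (j' : ℕ) ≤ (j : ℕ) := by exact_mod_cast hkle
          have hc1 : ¬ ((j.succ : ℕ) = (j' : ℕ) ∧ b j' ≤ a' j.succ) := by
            intro hcon
            have := hcon.1
            rw [Fin.val_succ] at this
            omega
          have hc2 : ¬ ((j.succ : ℕ) = (j' : ℕ) + 1) := by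
            rw [Fin.val_succ]
            omega
          simp only [hA, hF]
          rw [if_neg hc1, if_neg hc2]
          simp
      · push_neg at hp1
        have hp0 : p 0 ≠ 0 := hp01.resolve_right (by simp [hp1])
        refine lemT A
          (fun j => if (j : ℕ) < B then j.castSucc else j.succ)
          (fun j => if (j : ℕ) < B then -((j : ℕ) : ℤ) else ((j : ℕ) : ℤ)) ?_ ?_
        · intro j
          beta_reduce
          by_cases hjB : (j : ℕ) < B
          · rw [if_pos hjB]
            have hcond : ((j.castSucc : ℕ) = (j : ℕ) ∧ b j ≤ a' j.castSucc) :=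
              ⟨Fin.coe_castSucc j, le_trans (hP2 j hjB) (hlb _)⟩
            simp only [hA, hF]
            rw [if_pos hcond, map_pow, MvPolynomial.eval_X]
            exact pow_ne_zero _ hp0
          · rw [if_neg hjB]
            have hcond1 : ¬ ((j.succ : ℕ) = (j : ℕ) ∧ b j ≤ a' j.succ) := by
              intro hcon
              have := hcon.1
              rw [Fin.val_succ] at this
              omega
            simp only [hA, hF]
            rw [if_neg hcond1, if_pos (Fin.val_succ j)]
            have h3 := hP3 j (by omega)
            rw [show (a' j.succ - b j).toNat = 0 by omega, pow_zero]
            simp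
        · intro j j' hne hkle
          beta_reduce at hkle ⊢
          have hvne : (j' : ℕ) ≠ (j : ℕ) := fun h => hne (Fin.ext h)
          by_cases hjB : (j : ℕ) < B
          · rw [if_pos hjB] at hkle ⊢
            by_cases hj' : (j : ℕ) = (j' : ℕ) + 1
            · exfalso
              rw [if_pos (by omega : (j' : ℕ) < B)] at hkle
              omega
            · have hc1 : ¬ ((j.castSucc : ℕ) = (j' : ℕ) ∧ b j' ≤ a' j.castSucc) := by
                intro hcon
                have := hcon.1
                rw [Fin.coe_castSucc] at this
                omega
              have hc2 : ¬ ((j.castSucc : ℕ) = (j' : ℕ) + 1) := by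
                rw [Fin.coe_castSucc]
                omega
              simp only [hA, hF]
              rw [if_neg hc1, if_neg hc2]
              simp
          · rw [if_neg hjB] at hkle ⊢
            by_cases hj' : (j : ℕ) + 1 = (j' : ℕ)
            · exfalso
              rw [if_neg (by omega : ¬ (j' : ℕ) < B)] at hkle
              omega
            · have hc1 : ¬ ((j.succ : ℕ) = (j' : ℕ) ∧ b j' ≤ a' j.succ) := by
                intro hcon
                have := hcon.1
                rw [Fin.val_succ] at this
                omega
              have hc2 : ¬ ((j.succ : ℕ) = (j' : ℕ) + 1) := by
                rw [Fin.val_succ]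
                omega
              simp only [hA, hF]
              rw [if_neg hc1, if_neg hc2]
              simp
    have hker : LinearMap.ker (LinearMap.funLeft k k (σ.symm : Fin (n + 2) → Fin (n + 2))) = ⊥ :=
      LinearMap.ker_eq_bot.mpr
        (LinearMap.funLeft_injective_of_surjective k k _ σ.symm.surjective)
    have := base.map' (LinearMap.funLeft k k (σ.symm : Fin (n + 2) → Fin (n + 2))) hker
    exact this
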